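/- Suppose $\phi \in L^\infty(\mathbb{T})$ factors as $\phi = \phi_- \phi_0$ where $\phi_-$ is invertible in $\overline{H^\infty(\mathbb{T})}$ (i.e. both $\phi_-$ and $\phi_-^{-1}$ have conjugates in $H^\infty$) and $\phi_0 \in L^\infty(\mathbb{T})$ is invertible and even ($\phi_0(t) = \phi_0(t^{-1})$ a.e.). Then $M(\phi) = T(\phi)+H(\phi)$ is invertible on $H^2(\mathbb{T})$ with inverse $M(\phi_0^{-1})M(\phi_-^{-1})$. -/

import Mathlib

open MeasureTheory Complex Real
noncomputable section
namespace TH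

abbrev Tp : ℝ := 2 * Real.pi
instance : Fact (0 < Tp) := ⟨by positivity⟩
abbrev 𝕋 := AddCircle Tp
abbrev μ : Measure 𝕋 := AddCircle.haarAddCircle
abbrev L2 := Lp ℂ 2 μ

open scoped Classical in
/-- Multiplication operator by `φ` (defined to be `0` if `φ` is not essentially bounded). -/
def Lmul (φ : 𝕋 → ℂ) : L2 →L[ℂ] L2 :=
  if hφ : MemLp φ ⊤ μ then
    LinearMap.mkContinuous
      { toFun := fun f => ((Lp.memLp f).smul (p := ⊤) (r := 2) hφ).toLp (φ • ⇑f)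
        map_add' := fun f g => by
          rw [← MemLp.toLp_add]
          exact MemLp.toLp_congr _ _ (by
            filter_upwards [Lp.coeFn_add f g] with x hx
            simp only [Pi.smul_apply, smul_eq_mul, Pi.mul_apply, hx, Pi.add_apply, mul_add])
        map_smul' := fun c f => by
          rw [RingHom.id_apply, ← MemLp.toLp_const_smul]
          exact MemLp.toLp_congr ((Lp.memLp (c • f)).smul (p := ⊤) (r := 2) hφ)
            (((Lp.memLp f).smul (p := ⊤) (r := 2) hφ).const_smul c) (by
            filter_upwards [Lp.coeFn_smul c f] with x hx
            simp only [Pi.smul_apply, smul_eq_mul, Pi.mul_apply, hx]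
            ring) }
      (eLpNorm φ ⊤ μ).toReal
      (fun f => by
        simp only [LinearMap.coe_mk, AddHom.coe_mk]
        rw [Lp.norm_toLp, Lp.norm_def, ← ENNReal.toReal_mul]
        refine ENNReal.toReal_mono ?_ ?_
        · exact ENNReal.mul_ne_top hφ.eLpNorm_ne_top (Lp.eLpNorm_ne_top f)
        · exact eLpNorm_smul_le_eLpNorm_top_mul_eLpNorm 2 (Lp.aestronglyMeasurable f) φ)
  else 0

/-- Composition with `x ↦ -x` on `L²`. -/
def Cneg : L2 → L2 :=
  Lp.compMeasurePreserving (fun x : 𝕋 => -x) (Measure.measurePreserving_neg μ)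

/-- The flip operator `J : f(t) ↦ t⁻¹ f(t⁻¹)`. -/
def Jop : L2 →L[ℂ] L2 :=
  { toFun := fun f => Lmul (fun x => fourier (-1) x) (Cneg f)
    map_add' := fun f g => by
      show Lmul _ (Cneg (f + g)) = Lmul _ (Cneg f) + Lmul _ (Cneg g)
      unfold Cneg
      rw [map_add, map_add]
    map_smul' := fun c f => by
      show Lmul _ (Cneg (c • f)) = c • Lmul _ (Cneg f)
      rw [← map_smul (Lmul fun x => fourier (-1) x)]
      congr 1
      apply Lp.ext
      unfold Cneg
      filter_upwards [Lp.coeFn_compMeasurePreserving (c • f) (Measure.measurePreserving_neg μ),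
        Lp.coeFn_smul c (Lp.compMeasurePreserving (fun x : 𝕋 => -x)
          (Measure.measurePreserving_neg μ) f),
        (Measure.measurePreserving_neg μ).quasiMeasurePreserving.ae_eq_comp (Lp.coeFn_smul c f),
        Lp.coeFn_compMeasurePreserving f (Measure.measurePreserving_neg μ)]
        with x hx1 hx2 hx3 hx4
      refine hx1.trans (hx3.trans ?_)
      have h5 : ((c • (↑↑f : 𝕋 → ℂ)) ∘ Neg.neg) x = c • (↑↑f ∘ Neg.neg) x := rfl
      rw [h5, ← hx4]
      exact hx2.symm
    cont := by
      exact (Lmul _).continuous.comp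
        (Lp.isometry_compMeasurePreserving (E := ℂ) (p := 2)
          (Measure.measurePreserving_neg μ)).continuous }

/-- The Hardy space `H²(𝕋)`: closed span of `{t^n : n ≥ 0}`. -/
def Hardy : Submodule ℂ L2 :=
  (Submodule.span ℂ (Set.range fun n : ℕ => (fourierLp 2 (n : ℤ) : L2))).topologicalClosure

instance : CompleteSpace Hardy :=
  (Submodule.isClosed_topologicalClosure _).completeSpace_coe

/-- The Riesz projection, as an operator on `L²(𝕋)`. -/
def Pproj : L2 →L[ℂ] L2 := Hardy.subtypeL ∘L Hardy.orthogonalProjectionOnto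

/-- The Toeplitz operator `T(φ) : f ↦ P(φ f)` on `H²`. -/
def Top (φ : 𝕋 → ℂ) : Hardy →L[ℂ] Hardy :=
  Hardy.orthogonalProjectionOnto ∘L Lmul φ ∘L Hardy.subtypeL

/-- The Hankel operator `H(φ) : f ↦ P(φ · Jf)` on `H²`. -/
def Hop (φ : 𝕋 → ℂ) : Hardy →L[ℂ] Hardy :=
  Hardy.orthogonalProjectionOnto ∘L Lmul φ ∘L Jop ∘L Hardy.subtypeL

/-- The Toeplitz + Hankel operator `M(φ) = T(φ) + H(φ)`. -/
def Mop (φ : 𝕋 → ℂ) : Hardy →L[ℂ] Hardy := Top φ + Hop φ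

/-- The flip `φ̃(t) = φ(t⁻¹)` of a function on the circle. -/
def flip (φ : 𝕋 → ℂ) : 𝕋 → ℂ := fun x => φ (-x)


/-! ### Auxiliary lemmas -/

lemma Lmul_apply {φ : 𝕋 → ℂ} (hφ : MemLp φ ⊤ μ) (f : L2) :
    ⇑(Lmul φ f) =ᵐ[μ] fun x => φ x * f x := by
  rw [Lmul, dif_pos hφ]
  exact (MemLp.coeFn_toLp (((Lp.memLp f).smul (p := ⊤) (r := 2) hφ))).trans
    (by filter_upwards with x; simp)

lemma Lmul_congr {φ ψ : 𝕋 → ℂ} (hφ : MemLp φ ⊤ μ) (h : φ =ᵐ[μ] ψ) : Lmul φ = Lmul ψ := by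
  have hψ : MemLp ψ ⊤ μ := hφ.ae_eq h
  ext f
  exact (Lmul_apply hφ f).trans (((by filter_upwards [h] with x hx; rw [hx]) :
    (fun x => φ x * f x) =ᵐ[μ] fun x => ψ x * f x).trans (Lmul_apply hψ f).symm)

lemma memLp_mul {α β : 𝕋 → ℂ} (hα : MemLp α ⊤ μ) (hβ : MemLp β ⊤ μ) :
    MemLp (fun x => α x * β x) ⊤ μ :=
  (hβ.smul (p := ⊤) (r := ⊤) hα).ae_eq (by filter_upwards with x; simp)

lemma Lmul_comp {α β : 𝕋 → ℂ} (hα : MemLp α ⊤ μ) (hβ : MemLp β ⊤ μ) :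
    (Lmul α).comp (Lmul β) = Lmul (fun x => α x * β x) := by
  ext f
  refine ((Lmul_apply hα _).trans ?_).trans (Lmul_apply (memLp_mul hα hβ) f).symm
  filter_upwards [Lmul_apply hβ f] with x hx
  erw [hx]; ring

lemma Lmul_one : Lmul (fun _ : 𝕋 => (1:ℂ)) = ContinuousLinearMap.id ℂ L2 := by
  ext f
  exact (Lmul_apply (memLp_top_const 1) f).trans (by filter_upwards with x; simp)

lemma memLp_fourier (n : ℤ) : MemLp (fun x : 𝕋 => (fourier n x : ℂ)) ⊤ μ :=
  memLp_top_of_bound (map_continuous (fourier n)).aestronglyMeasurable 1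
    (Filter.Eventually.of_forall fun x =>
      (ContinuousMap.norm_coe_le_norm _ x).trans (le_of_eq (fourier_norm n)))

lemma comp_neg_ae {g h : 𝕋 → ℂ} (H : g =ᵐ[μ] h) :
    (fun x => g (-x)) =ᵐ[μ] fun x => h (-x) :=
  (Measure.measurePreserving_neg μ).quasiMeasurePreserving.ae_eq_comp H

lemma Cneg_apply (f : L2) : ⇑(Cneg f) =ᵐ[μ] fun x => f (-x) :=
  Lp.coeFn_compMeasurePreserving f (Measure.measurePreserving_neg μ)

lemma Jop_apply (f : L2) : ⇑(Jop f) =ᵐ[μ] fun x => fourier (-1) x * f (-x) := by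
  refine (Lmul_apply (memLp_fourier (-1)) (Cneg f)).trans ?_
  filter_upwards [Cneg_apply f] with x hx
  rw [hx]

lemma fourier_neg_arg (n : ℤ) (x : 𝕋) : (fourier n (-x) : ℂ) = fourier (-n) x := by
  rw [fourier_apply, fourier_apply, smul_neg, ← neg_smul]

lemma fourier_inv_mul (x : 𝕋) : (fourier (-1) x : ℂ) * fourier (-1) (-x) = 1 := by
  rw [fourier_neg_arg, ← fourier_add]
  norm_num

lemma Jop_Jop (f : L2) : Jop (Jop f) = f := by
  apply Lp.ext
  filter_upwards [Jop_apply (Jop f), comp_neg_ae (Jop_apply f)] with x h1 h2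
  rw [h1]
  rw [h2, neg_neg, ← mul_assoc, fourier_inv_mul, one_mul]

lemma memLp_flip {β : 𝕋 → ℂ} (hβ : MemLp β ⊤ μ) : MemLp (flip β) ⊤ μ :=
  hβ.comp_measurePreserving (Measure.measurePreserving_neg μ)

lemma Jop_Lmul {β : 𝕋 → ℂ} (hβ : MemLp β ⊤ μ) (f : L2) :
    Jop (Lmul β f) = Lmul (flip β) (Jop f) := by
  apply Lp.ext
  filter_upwards [Jop_apply (Lmul β f), comp_neg_ae (Lmul_apply hβ f),
    Lmul_apply (memLp_flip hβ) (Jop f), Jop_apply f] with x h1 h2 h3 h4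
  rw [h1, h3, h4]
  rw [h2]
  show fourier (-1) x * (β (-x) * f (-x)) = β (-x) * (fourier (-1) x * f (-x))
  ring

lemma inner_fourierLp (n : ℤ) (g : L2) :
    (inner ℂ (fourierLp 2 n : L2) g : ℂ) = fourierCoeff (⇑g) n := by
  rw [← fourierBasis_repr g n, HilbertBasis.repr_apply_apply]
  congr 1
  exact (congrFun coe_fourierBasis n).symm

lemma orthonormal_fourierLp : Orthonormal ℂ (fun n : ℤ => (fourierLp 2 n : L2)) := by
  have h := (fourierBasis (T := Tp)).orthonormal
  rwa [coe_fourierBasis] at h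

lemma orth_fourierLp {m n : ℤ} (h : m ≠ n) :
    (inner ℂ (fourierLp 2 m : L2) (fourierLp 2 n : L2) : ℂ) = 0 :=
  orthonormal_fourierLp.2 h

lemma mem_Hardy_orth {v : L2} (h : ∀ n : ℕ, (inner ℂ (fourierLp 2 (n : ℤ) : L2) v : ℂ) = 0) :
    v ∈ Hardyᗮ := by
  rw [Submodule.mem_orthogonal]
  intro u hu
  have hker : Hardy ≤ LinearMap.ker (innerSL ℂ v : L2 →ₗ[ℂ] ℂ) := by
    apply Submodule.topologicalClosure_minimal
    · rw [Submodule.span_le]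
      rintro _ ⟨n, rfl⟩
      simp only [SetLike.mem_coe, LinearMap.mem_ker, innerSL_apply_apply]
      exact inner_eq_zero_symm.mp (h n)
    · exact ContinuousLinearMap.isClosed_ker (innerSL ℂ v)
  have h2 := hker hu
  rw [LinearMap.mem_ker] at h2
  exact inner_eq_zero_symm.mp h2

lemma Pproj_of_mem {v : L2} (hv : v ∈ Hardy) : Pproj v = v := by
  show ((Hardy.orthogonalProjectionOnto v : Hardy) : L2) = v
  exact Hardy.starProjection_eq_self_iff.mpr hv

lemma Pproj_of_orth {v : L2} (hv : v ∈ Hardyᗮ) : Pproj v = 0 := by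
  show ((Hardy.orthogonalProjectionOnto v : Hardy) : L2) = 0
  rw [Submodule.orthogonalProjectionOnto_apply_of_mem_orthogonal hv]
  rfl

lemma fourierLp_mem_Hardy {n : ℤ} (hn : 0 ≤ n) : (fourierLp 2 n : L2) ∈ Hardy := by
  apply Submodule.le_topologicalClosure
  apply Submodule.subset_span
  exact ⟨n.toNat, by simp [Int.toNat_of_nonneg hn]⟩

lemma Pproj_fourierLp_neg {n : ℤ} (hn : n < 0) : Pproj (fourierLp 2 n) = 0 := by
  refine Pproj_of_orth (mem_Hardy_orth fun m => orth_fourierLp (by omega))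

lemma ext_fourierLp {S T : L2 →L[ℂ] L2}
    (h : ∀ n : ℤ, S (fourierLp 2 n) = T (fourierLp 2 n)) : S = T := by
  refine ContinuousLinearMap.ext_on (s := Set.range (fourierLp 2 (T := Tp))) ?_ ?_
  · have hd := (fourierBasis (T := Tp)).dense_span
    rw [coe_fourierBasis] at hd
    exact Submodule.dense_iff_topologicalClosure_eq_top.mpr hd
  · rintro _ ⟨n, rfl⟩
    exact h n

lemma Jop_fourierLp (n : ℤ) : Jop (fourierLp 2 n) = (fourierLp 2 (-1 - n) : L2) := by
  apply Lp.ext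
  filter_upwards [Jop_apply (fourierLp 2 n), comp_neg_ae (coeFn_fourierLp 2 n),
    coeFn_fourierLp 2 (-1 - n)] with x h1 h2 h3
  rw [h1, h3, h2, fourier_neg_arg n x, ← fourier_add]
  have he : (-1 : ℤ) + -n = -1 - n := by ring
  rw [he]

lemma Jop_Pproj_op : Jop.comp Pproj = Jop - Pproj.comp Jop := by
  apply ext_fourierLp
  intro n
  simp only [ContinuousLinearMap.comp_apply, ContinuousLinearMap.sub_apply]
  by_cases hn : 0 ≤ n
  · rw [Pproj_of_mem (fourierLp_mem_Hardy hn), Jop_fourierLp, Pproj_fourierLp_neg (by omega)]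
    rw [sub_zero]
  · push_neg at hn
    rw [Pproj_fourierLp_neg hn, map_zero, Jop_fourierLp,
      Pproj_of_mem (fourierLp_mem_Hardy (by omega : (0:ℤ) ≤ -1 - n)), sub_self]

lemma fourierCoeff_congr {f g : 𝕋 → ℂ} (h : f =ᵐ[μ] g) (n : ℤ) :
    fourierCoeff f n = fourierCoeff g n := by
  unfold fourierCoeff
  exact integral_congr_ae (by filter_upwards [h] with x hx; rw [hx])

lemma fourierCoeff_mul_fourier (α : 𝕋 → ℂ) (m n : ℤ) :
    fourierCoeff (fun x => α x * fourier n x) m = fourierCoeff α (m - n) := by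
  unfold fourierCoeff
  congr 1
  funext x
  simp only [smul_eq_mul]
  rw [show -(m - n) = -m + n from by ring, fourier_add]
  ring

lemma Pproj_Lmul_anti {α : 𝕋 → ℂ} (hα : MemLp α ⊤ μ)
    (hαa : ∀ n : ℤ, 0 < n → fourierCoeff α n = 0) (v : L2) :
    Pproj (Lmul α (Pproj v)) = Pproj (Lmul α v) := by
  have key : (Pproj.comp (Lmul α)).comp Pproj = Pproj.comp (Lmul α) := by
    apply ext_fourierLp
    intro n
    simp only [ContinuousLinearMap.comp_apply]
    by_cases hn : 0 ≤ n
    · rw [Pproj_of_mem (fourierLp_mem_Hardy hn)]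
    · push_neg at hn
      rw [Pproj_fourierLp_neg hn, map_zero, map_zero]
      symm
      refine Pproj_of_orth (mem_Hardy_orth fun m => ?_)
      rw [inner_fourierLp]
      have hae : ⇑(Lmul α (fourierLp 2 n)) =ᵐ[μ] fun x => α x * fourier n x := by
        refine (Lmul_apply hα (fourierLp 2 n)).trans ?_
        filter_upwards [coeFn_fourierLp 2 n] with x hx
        rw [hx]
      rw [fourierCoeff_congr hae, fourierCoeff_mul_fourier]
      exact hαa _ (by omega)
  have := ContinuousLinearMap.ext_iff.mp key v
  simpa only [ContinuousLinearMap.comp_apply] using this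

lemma coe_Mop (φ : 𝕋 → ℂ) (g : Hardy) :
    ((Mop φ g : Hardy) : L2) = Pproj (Lmul φ ((g : L2) + Jop (g : L2))) := by
  show ((Top φ g + Hop φ g : Hardy) : L2) = _
  rw [map_add (Lmul φ), map_add Pproj]
  rfl

lemma Jop_Pproj_elem (v : L2) : Jop (Pproj v) = Jop v - Pproj (Jop v) := by
  have := ContinuousLinearMap.ext_iff.mp Jop_Pproj_op v
  simpa only [ContinuousLinearMap.comp_apply, ContinuousLinearMap.sub_apply] using this

lemma Lmul_comp_elem {α β : 𝕋 → ℂ} (hα : MemLp α ⊤ μ) (hβ : MemLp β ⊤ μ) (v : L2) :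
    Lmul α (Lmul β v) = Lmul (fun x => α x * β x) v := by
  have := ContinuousLinearMap.ext_iff.mp (Lmul_comp hα hβ) v
  simpa only [ContinuousLinearMap.comp_apply] using this

lemma Mop_comp_of_anti {α β : 𝕋 → ℂ} (hα : MemLp α ⊤ μ) (hβ : MemLp β ⊤ μ)
    (hαa : ∀ n : ℤ, 0 < n → fourierCoeff α n = 0) :
    (Mop α).comp (Mop β) = Mop (fun x => α x * β x) := by
  refine ContinuousLinearMap.ext fun f => Subtype.ext ?_
  rw [ContinuousLinearMap.comp_apply, coe_Mop, coe_Mop, coe_Mop]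
  set w := Lmul β ((f : L2) + Jop (f : L2)) with hw
  rw [Jop_Pproj_elem w, map_add (Lmul α), map_sub (Lmul α), map_add Pproj, map_sub Pproj,
    Pproj_Lmul_anti hα hαa w, Pproj_Lmul_anti hα hαa (Jop w), sub_self, add_zero,
    hw, Lmul_comp_elem hα hβ]

lemma Mop_comp_of_even {α β : 𝕋 → ℂ} (hα : MemLp α ⊤ μ) (hβ : MemLp β ⊤ μ)
    (hβe : ∀ᵐ x ∂μ, β (-x) = β x) :
    (Mop α).comp (Mop β) = Mop (fun x => α x * β x) := by
  refine ContinuousLinearMap.ext fun f => Subtype.ext ?_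
  rw [ContinuousLinearMap.comp_apply, coe_Mop, coe_Mop, coe_Mop]
  set v := (f : L2) + Jop (f : L2) with hv
  set w := Lmul β v with hw
  have hJv : Jop v = v := by rw [hv, map_add, Jop_Jop, add_comm]
  have hflip : flip β =ᵐ[μ] β := hβe
  have hJw : Jop w = w := by
    rw [hw, Jop_Lmul hβ, hJv, Lmul_congr (memLp_flip hβ) hflip]
  have hfix : Pproj w + Jop (Pproj w) = w := by
    rw [Jop_Pproj_elem w, hJw]
    abel
  rw [hfix, hw, Lmul_comp_elem hα hβ]

lemma Mop_congr {φ ψ : 𝕋 → ℂ} (hφ : MemLp φ ⊤ μ) (h : φ =ᵐ[μ] ψ) : Mop φ = Mop ψ := by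
  unfold Mop Top Hop
  rw [Lmul_congr hφ h]

lemma Mop_one : Mop (fun _ : 𝕋 => (1:ℂ)) = ContinuousLinearMap.id ℂ Hardy := by
  refine ContinuousLinearMap.ext fun f => Subtype.ext ?_
  rw [coe_Mop, Lmul_one]
  show Pproj ((f : L2) + Jop (f : L2)) = (f : L2)
  have h1 : Pproj (f : L2) = (f : L2) := Pproj_of_mem f.2
  have h2 : Pproj (Jop (f : L2)) = 0 := by
    have h3 := Jop_Pproj_elem (f : L2)
    rw [h1] at h3
    exact sub_eq_self.mp h3.symm
  rw [map_add, h1, h2, add_zero]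

/-- If `φ = φ₋ φ₀` with `φ₋` invertible in `H^∞-bar` and `φ₀` invertible in `L^∞` and even,
then `M(φ)` is invertible with inverse `M(φ₀⁻¹) M(φ₋⁻¹)`. -/
theorem stmt_5 (φ φm φ0 : 𝕋 → ℂ) (hφ : MemLp φ ⊤ μ)
    (hfac : ∀ᵐ x ∂μ, φ x = φm x * φ0 x)
    (hφm : MemLp φm ⊤ μ) (hφmi : MemLp (fun x => (φm x)⁻¹) ⊤ μ)
    (hφm0 : ∀ᵐ x ∂μ, φm x ≠ 0)
    (hφma : ∀ n : ℤ, 0 < n → fourierCoeff φm n = 0)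
    (hφmia : ∀ n : ℤ, 0 < n → fourierCoeff (fun x => (φm x)⁻¹) n = 0)
    (hφ0 : MemLp φ0 ⊤ μ) (hφ0i : MemLp (fun x => (φ0 x)⁻¹) ⊤ μ)
    (hφ00 : ∀ᵐ x ∂μ, φ0 x ≠ 0)
    (hφ0e : ∀ᵐ x ∂μ, φ0 (-x) = φ0 x) :
    (Mop φ).comp ((Mop fun x => (φ0 x)⁻¹).comp (Mop fun x => (φm x)⁻¹)) =
        ContinuousLinearMap.id ℂ Hardy ∧
    ((Mop fun x => (φ0 x)⁻¹).comp (Mop fun x => (φm x)⁻¹)).comp (Mop φ) =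
        ContinuousLinearMap.id ℂ Hardy := by
  have e1 : Mop φ = (Mop φm).comp (Mop φ0) :=
    (Mop_congr hφ hfac).trans (Mop_comp_of_even hφm hφ0 hφ0e).symm
  have e0i : ∀ᵐ x ∂μ, (φ0 (-x))⁻¹ = (φ0 x)⁻¹ := by
    filter_upwards [hφ0e] with x hx; rw [hx]
  have h00 : (Mop φ0).comp (Mop fun x => (φ0 x)⁻¹) = ContinuousLinearMap.id ℂ Hardy := by
    rw [Mop_comp_of_even hφ0 hφ0i e0i,
      Mop_congr (memLp_mul hφ0 hφ0i)
        (by filter_upwards [hφ00] with x hx; rw [mul_inv_cancel₀ hx]), Mop_one]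
  have h00' : (Mop fun x => (φ0 x)⁻¹).comp (Mop φ0) = ContinuousLinearMap.id ℂ Hardy := by
    rw [Mop_comp_of_even hφ0i hφ0 hφ0e,
      Mop_congr (memLp_mul hφ0i hφ0)
        (by filter_upwards [hφ00] with x hx; rw [inv_mul_cancel₀ hx]), Mop_one]
  have hmm : (Mop φm).comp (Mop fun x => (φm x)⁻¹) = ContinuousLinearMap.id ℂ Hardy := by
    rw [Mop_comp_of_anti hφm hφmi hφma,
      Mop_congr (memLp_mul hφm hφmi)
        (by filter_upwards [hφm0] with x hx; rw [mul_inv_cancel₀ hx]), Mop_one]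
  have hmm' : (Mop fun x => (φm x)⁻¹).comp (Mop φm) = ContinuousLinearMap.id ℂ Hardy := by
    rw [Mop_comp_of_anti hφmi hφm hφmia,
      Mop_congr (memLp_mul hφmi hφm)
        (by filter_upwards [hφm0] with x hx; rw [inv_mul_cancel₀ hx]), Mop_one]
  constructor
  · rw [e1, ContinuousLinearMap.comp_assoc,
      ← ContinuousLinearMap.comp_assoc (Mop φ0) (Mop fun x => (φ0 x)⁻¹) (Mop fun x => (φm x)⁻¹),
      h00, ContinuousLinearMap.id_comp, hmm]
  · rw [e1, ContinuousLinearMap.comp_assoc,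
      ← ContinuousLinearMap.comp_assoc (Mop fun x => (φm x)⁻¹) (Mop φm) (Mop φ0),
      hmm', ContinuousLinearMap.id_comp, h00']

end TH
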